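/- arXiv:0802.0853 — 3 statements merged into one kernel-verified Lean document; each statement's English description precedes it below -/
import Mathlib

section
/- Let K be a field of characteristic different from 2 and let u2, u3, u4 ∈ K[x0,x1,x2] be polynomials. Let q = (q0,q1,q2,q3) ∈ K^4 and write a = (q0,q1,q2). Suppose that q is a singular point of the quartic F = u2*x3^2 + 2*u3*x3 + u4, that is: u2(a)*q3^2 + 2*u3(a)*q3 + u4(a) = 0, u2(a)*q3 + u3(a) = 0 (vanishing of ∂F/∂x3 up to the factor 2), and for each i ∈ {0,1,2}, (∂u2/∂xi)(a)*q3^2 + 2*(∂u3/∂xi)(a)*q3 + (∂u4/∂xi)(a) = 0 (vanishing of ∂F/∂xi). Then a is a singular point of the discriminant sextic G = u3^2 - u2*u4, i.e. G(a) = 0 and (∂G/∂xi)(a) = 0 for each i ∈ {0,1,2}. (Second part of Proposition 2.2: if Q ∈ X is a singular point different from P0, then π(Q) is a singular point of C_X.) -/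
open MvPolynomial

/-- Proposition 2.2 (singular points): if `q = (a, q3)` is a singular point of
the nodal quartic `F = u2*x3^2 + 2*u3*x3 + u4` (other than the node `P0`), then
its projection `a` is a singular point of the discriminant sextic
`G = u3^2 - u2*u4`. -/
theorem singular_point_maps_to_singular_point (K : Type*) [Field K]
    (hchar : (2 : K) ≠ 0)
    (u2 u3 u4 : MvPolynomial (Fin 3) K) (a : Fin 3 → K) (q3 : K)
    (hF : eval a u2 * q3 ^ 2 + 2 * eval a u3 * q3 + eval a u4 = 0)
    (hF3 : eval a u2 * q3 + eval a u3 = 0)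
    (hFi : ∀ i : Fin 3,
      eval a (pderiv i u2) * q3 ^ 2 + 2 * eval a (pderiv i u3) * q3
        + eval a (pderiv i u4) = 0) :
    eval a (u3 ^ 2 - u2 * u4) = 0 ∧
      ∀ i : Fin 3, eval a (pderiv i (u3 ^ 2 - u2 * u4)) = 0 := by
  constructor
  · simp only [map_sub, map_mul, map_pow]
    linear_combination (eval a u3 - eval a u2 * q3) * hF3 - eval a u2 * hF
      + 2 * eval a u2 * q3 * hF3
  · intro i
    have h := hFi i
    simp only [map_sub, map_mul, map_pow, pderiv_mul, pderiv_pow, map_add,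
      Nat.cast_ofNat, pow_one, map_ofNat]
    linear_combination (-eval a u2) * h
      + (2 * eval a (pderiv i u3) + 2 * eval a (pderiv i u2) * q3) * hF3
      - eval a (pderiv i u2) * hF
end

section
/- Let R be a commutative ring, let x, u2, u3, u4 ∈ R, and set F = u2*x^2 + 2*u3*x + u4 and G = u3^2 - u2*u4. Let q be a maximal ideal of R with F ∈ q and G ∈ q. Then G ∈ q^2 if and only if either F ∈ q^2, or all three of u2, u3, u4 lie in q. (This is the ideal-theoretic content of Lemma 2.5: for Q ∈ X with π(Q) ∈ C_X, the point π(Q) is singular on C_X if and only if Q ∈ Sing(X) or Q lies on the intersection of the cones Y2 ∩ Y3 ∩ Y4 defined by u2, u3, u4.) -/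
/-- Ideal-theoretic content of Lemma 2.5: let `q` be a maximal ideal containing
`F = u2*x^2 + 2*u3*x + u4` and `G = u3^2 - u2*u4`. Then `G ∈ q^2` if and only
if `F ∈ q^2` (the corresponding point of the quartic is singular) or
`u2, u3, u4 ∈ q` (the point lies on `Y2 ∩ Y3 ∩ Y4`). -/
theorem lemma25_ideal (R : Type*) [CommRing R] (x u2 u3 u4 : R)
    (q : Ideal R) (hq : q.IsMaximal)
    (hF : u2 * x ^ 2 + 2 * u3 * x + u4 ∈ q)
    (hG : u3 ^ 2 - u2 * u4 ∈ q) :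
    u3 ^ 2 - u2 * u4 ∈ q ^ 2 ↔
      (u2 * x ^ 2 + 2 * u3 * x + u4 ∈ q ^ 2 ∨ (u2 ∈ q ∧ u3 ∈ q ∧ u4 ∈ q)) := by
  have hprime : q.IsPrime := hq.isPrime
  have mulmem : ∀ a b : R, a ∈ q → b ∈ q → a * b ∈ q ^ 2 := by
    intro a b ha hb
    rw [pow_two]
    exact Ideal.mul_mem_mul ha hb
  -- cancellation of u2 modulo q^2 when u2 ∉ q
  have key : ∀ a : R, u2 ∉ q → u2 * a ∈ q ^ 2 → a ∈ q ^ 2 := by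
    intro a hu2 ha
    obtain ⟨v, m, hm, hv⟩ := hq.exists_inv hu2
    have h1 : (1 - v * u2) ∈ q := by
      have : (1 : R) - v * u2 = m := by linear_combination -hv
      rw [this]; exact hm
    have h2 : a * ((1 - v * u2) * (1 - v * u2)) ∈ q ^ 2 :=
      Ideal.mul_mem_left _ _ (mulmem _ _ h1 h1)
    have h3 : (2 * v - v ^ 2 * u2) * (u2 * a) ∈ q ^ 2 :=
      Ideal.mul_mem_left _ _ ha
    have : a = a * ((1 - v * u2) * (1 - v * u2)) + (2 * v - v ^ 2 * u2) * (u2 * a) := by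
      ring
    rw [this]
    exact Ideal.add_mem _ h2 h3
  by_cases hu2 : u2 ∈ q
  · -- then u3 ∈ q and u4 ∈ q, and G ∈ q^2
    have hu3 : u3 ∈ q := by
      have : u3 ^ 2 ∈ q := by
        have : u3 ^ 2 = (u3 ^ 2 - u2 * u4) + u2 * u4 := by ring
        rw [this]
        exact Ideal.add_mem _ hG (Ideal.mul_mem_right _ _ hu2)
      exact hprime.mem_of_pow_mem 2 this
    have hu4 : u4 ∈ q := by
      have : u4 = (u2 * x ^ 2 + 2 * u3 * x + u4) - u2 * x ^ 2 - 2 * u3 * x := by ring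
      rw [this]
      exact Ideal.sub_mem _ (Ideal.sub_mem _ hF (Ideal.mul_mem_right _ _ hu2))
        (Ideal.mul_mem_right _ _ (Ideal.mul_mem_left _ _ hu3))
    have hG2 : u3 ^ 2 - u2 * u4 ∈ q ^ 2 := by
      have : u3 ^ 2 - u2 * u4 = u3 * u3 - u2 * u4 := by ring
      rw [this]
      exact Ideal.sub_mem _ (mulmem _ _ hu3 hu3) (mulmem _ _ hu2 hu4)
    exact ⟨fun _ => Or.inr ⟨hu2, hu3, hu4⟩, fun _ => hG2⟩
  · -- u2 ∉ q : then u2*x + u3 ∈ q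
    have hlin : u2 * x + u3 ∈ q := by
      apply hprime.mem_of_pow_mem 2
      have : (u2 * x + u3) ^ 2 =
          u2 * (u2 * x ^ 2 + 2 * u3 * x + u4) + (u3 ^ 2 - u2 * u4) := by ring
      rw [this]
      exact Ideal.add_mem _ (Ideal.mul_mem_left _ _ hF) hG
    have hsq : (u2 * x + u3) * (u2 * x + u3) ∈ q ^ 2 := mulmem _ _ hlin hlin
    constructor
    · intro hG2
      left
      apply key _ hu2
      have : u2 * (u2 * x ^ 2 + 2 * u3 * x + u4) =
          (u2 * x + u3) * (u2 * x + u3) - (u3 ^ 2 - u2 * u4) := by ring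
      rw [this]
      exact Ideal.sub_mem _ hsq hG2
    · rintro (hF2 | ⟨h2, _, _⟩)
      · have : u3 ^ 2 - u2 * u4 =
            (u2 * x + u3) * (u2 * x + u3) - u2 * (u2 * x ^ 2 + 2 * u3 * x + u4) := by ring
        rw [this]
        exact Ideal.sub_mem _ hsq (Ideal.mul_mem_left _ _ hF2)
      · exact absurd h2 hu2
end

section
/- Let K be a field of characteristic different from 2, let u2, u3, u4 ∈ K[x0,x1,x2], and set G = u3^2 - u2*u4. Let q = (q0,q1,q2,q3) ∈ K^4, write a = (q0,q1,q2), and suppose u2(a)*q3^2 + 2*u3(a)*q3 + u4(a) = 0 (i.e. the point q lies on the quartic F = u2*x3^2 + 2*u3*x3 + u4) and G(a) = 0 (i.e. a lies on the discriminant sextic C_X). Then (∂G/∂xi)(a) = 0 for all i ∈ {0,1,2} if and only if either [u2(a)*q3 + u3(a) = 0 and (∂u2/∂xi)(a)*q3^2 + 2*(∂u3/∂xi)(a)*q3 + (∂u4/∂xi)(a) = 0 for all i ∈ {0,1,2}] (i.e. q is a singular point of the quartic F), or u2(a) = u3(a) = u4(a) = 0. (Pointwise form of Lemma 2.5: π(Q)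 ∈ Sing C_X if and only if Q ∈ Sing(X) ∪ (Y2 ∩ Y3 ∩ Y4).) -/
open MvPolynomial

/-- Pointwise form of Lemma 2.5: suppose the point `q = (a, q3)` lies on the
quartic `F = u2*x3^2 + 2*u3*x3 + u4` and `a` lies on the discriminant sextic
`G = u3^2 - u2*u4`. Then `a` is a singular point of `G` if and only if either
`q` is a singular point of the quartic, or `u2(a) = u3(a) = u4(a) = 0`. -/
theorem lemma25_pointwise (K : Type*) [Field K] (hchar : (2 : K) ≠ 0)
    (u2 u3 u4 : MvPolynomial (Fin 3) K) (a : Fin 3 → K) (q3 : K)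
    (hF : eval a u2 * q3 ^ 2 + 2 * eval a u3 * q3 + eval a u4 = 0)
    (hG : eval a (u3 ^ 2 - u2 * u4) = 0) :
    (∀ i : Fin 3, eval a (pderiv i (u3 ^ 2 - u2 * u4)) = 0) ↔
      ((eval a u2 * q3 + eval a u3 = 0 ∧
          ∀ i : Fin 3,
            eval a (pderiv i u2) * q3 ^ 2 + 2 * eval a (pderiv i u3) * q3
              + eval a (pderiv i u4) = 0) ∨
        (eval a u2 = 0 ∧ eval a u3 = 0 ∧ eval a u4 = 0)) := by
  set A := eval a u2 with hAdef
  set B := eval a u3 with hBdef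
  set C := eval a u4 with hCdef
  have hG' : B ^ 2 - A * C = 0 := by
    rw [map_sub, map_mul, map_pow] at hG
    exact hG
  have hEv : ∀ i : Fin 3, eval a (pderiv i (u3 ^ 2 - u2 * u4)) =
      2 * B * eval a (pderiv i u3) -
        (eval a (pderiv i u2) * C + A * eval a (pderiv i u4)) := by
    intro i
    simp only [pow_two, map_sub, pderiv_mul, map_add, map_mul]
    ring
  by_cases hA : A = 0
  · have hB : B = 0 := by
      have h2 : B ^ 2 = 0 := by linear_combination hG' + C * hA
      exact pow_eq_zero_iff (n := 2) (by norm_num) |>.mp h2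
    have hC : C = 0 := by linear_combination hF - q3 ^ 2 * hA - 2 * q3 * hB
    constructor
    · intro _; exact Or.inr ⟨hA, hB, hC⟩
    · intro _ i
      rw [hEv i, hB, hC, hA]
      ring
  · have hq : A * q3 + B = 0 := by
      have h2 : (A * q3 + B) ^ 2 = 0 := by
        linear_combination A * hF + hG'
      exact pow_eq_zero_iff (n := 2) (by norm_num) |>.mp h2
    constructor
    · intro h
      left
      refine ⟨hq, fun i => ?_⟩
      have hi := h i
      rw [hEv i] at hi
      set Ai := eval a (pderiv i u2)
      set Bi := eval a (pderiv i u3)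
      set Ci := eval a (pderiv i u4)
      have key : A ^ 2 * (Ai * q3 ^ 2 + 2 * Bi * q3 + Ci) = 0 := by
        linear_combination (Ai * (A * q3 - B) + 2 * Bi * A) * hq + Ai * hG' + (-A) * hi
      have hA2 : A ^ 2 ≠ 0 := pow_ne_zero 2 hA
      exact (mul_eq_zero.mp key).resolve_left hA2
    · rintro (⟨-, h⟩ | ⟨hA0, -, -⟩)
      · intro i
        have hi := h i
        rw [hEv i]
        set Ai := eval a (pderiv i u2)
        set Bi := eval a (pderiv i u3)
        set Ci := eval a (pderiv i u4)
        have key : A * (2 * B * Bi - (Ai * C + A * Ci)) = 0 := by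
          linear_combination (-A ^ 2) * hi + (Ai * (A * q3 - B) + 2 * Bi * A) * hq + Ai * hG'
        exact (mul_eq_zero.mp key).resolve_left hA
      · exact absurd hA0 hA
end
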